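/- arXiv:2308.05706 — 2 statements merged into one kernel-verified Lean document; each statement's English description precedes it below -/
import Mathlib

section
/- Let k be a field, H a Hopf algebra over k, and B a right coideal subalgebra of H. Then the left ideal HB⁺ equals the subspace of H spanned by {Σᵢ ε(xᵢ)yᵢ − Σᵢ xᵢε(yᵢ) : Σᵢ xᵢ ⊗ yᵢ ∈ H □^{H/HB⁺} H}; equivalently, the quotient map H → H/HB⁺ is the coequalizer (in vector spaces) of the two maps ε ⊗ id and id ⊗ ε restricted to the cotensor product H □^{H/HB⁺} H. -/
open TensorProduct

noncomputable section

namespace HopfGalois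

variable (k : Type*) (H : Type*) [Field k] [Ring H] [HopfAlgebra k H]

/-- The linear map `H ⊗ H → H`, `x ⊗ y ↦ ε(x) • y`. -/
def epsTensorId : H ⊗[k] H →ₗ[k] H :=
  (TensorProduct.lid k H).toLinearMap ∘ₗ
    TensorProduct.map (Coalgebra.counit : H →ₗ[k] k) (LinearMap.id : H →ₗ[k] H)

/-- The linear map `H ⊗ H → H`, `x ⊗ y ↦ ε(y) • x`. -/
def idTensorEps : H ⊗[k] H →ₗ[k] H :=
  (TensorProduct.rid k H).toLinearMap ∘ₗ
    TensorProduct.map (LinearMap.id : H →ₗ[k] H) (Coalgebra.counit : H →ₗ[k] k)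

/-- `x ⊗ y ↦ Σ x₍₁₎ ⊗ π_I(x₍₂₎) ⊗ y`. -/
def cotensorL (I : Submodule k H) : H ⊗[k] H →ₗ[k] H ⊗[k] ((H ⧸ I) ⊗[k] H) :=
  TensorProduct.map (LinearMap.id : H →ₗ[k] H)
      (TensorProduct.map I.mkQ (LinearMap.id : H →ₗ[k] H))
    ∘ₗ (TensorProduct.assoc k H H H).toLinearMap
    ∘ₗ TensorProduct.map (Coalgebra.comul : H →ₗ[k] H ⊗[k] H) (LinearMap.id : H →ₗ[k] H)

/-- `x ⊗ y ↦ Σ x ⊗ π_I(y₍₁₎) ⊗ y₍₂₎`. -/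
def cotensorR (I : Submodule k H) : H ⊗[k] H →ₗ[k] H ⊗[k] ((H ⧸ I) ⊗[k] H) :=
  TensorProduct.map (LinearMap.id : H →ₗ[k] H)
    (TensorProduct.map I.mkQ (LinearMap.id : H →ₗ[k] H)
      ∘ₗ (Coalgebra.comul : H →ₗ[k] H ⊗[k] H))

/-- The cotensor product `H □^{H/I} H` as a subspace of `H ⊗ H`. -/
def cotensor (I : Submodule k H) : Submodule k (H ⊗[k] H) :=
  LinearMap.ker (cotensorL k H I - cotensorR k H I)

/-- The subspace of coinvariants `H^{co H/I}`:
`{x ∈ H : Σ π_I(x₍₁₎) ⊗ x₍₂₎ = π_I(1) ⊗ x}`. -/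
def coinv (I : Submodule k H) : Submodule k H :=
  LinearMap.ker
    ((TensorProduct.map I.mkQ (LinearMap.id : H →ₗ[k] H)
        ∘ₗ (Coalgebra.comul : H →ₗ[k] H ⊗[k] H))
      - TensorProduct.mk k (H ⧸ I) H (I.mkQ 1))

/-- A left ideal coideal: a left ideal `I` with `ε(I) = 0` and `Δ(I) ⊆ I ⊗ H + H ⊗ I`. -/
structure IsLeftIdealCoideal (I : Submodule k H) : Prop where
  mul_mem_left : ∀ (h x : H), x ∈ I → h * x ∈ I
  counit_zero : ∀ x ∈ I, (Coalgebra.counit : H →ₗ[k] k) x = 0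
  comul_mem : ∀ x ∈ I, (Coalgebra.comul : H →ₗ[k] H ⊗[k] H) x ∈
    LinearMap.range (TensorProduct.map I.subtype (LinearMap.id : H →ₗ[k] H)) ⊔
      LinearMap.range (TensorProduct.map (LinearMap.id : H →ₗ[k] H) I.subtype)

/-- A right coideal subalgebra: a subalgebra `B` with `Δ(B) ⊆ B ⊗ H`. -/
def IsRightCoidealSubalgebra (B : Subalgebra k H) : Prop :=
  ∀ b ∈ B, (Coalgebra.comul : H →ₗ[k] H ⊗[k] H) b ∈
    LinearMap.range
      (TensorProduct.map (Subalgebra.toSubmodule B).subtype (LinearMap.id : H →ₗ[k] H))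

/-- The left ideal of `H` generated by a subset `S`, as a `k`-subspace of `H`. -/
def leftIdealGen (S : Set H) : Submodule k H :=
  Submodule.span k {z : H | ∃ h : H, ∃ b ∈ S, z = h * b}

/-- `S⁺ = S ∩ ker ε`. -/
def plusPart (S : Set H) : Set H :=
  {b ∈ S | (Coalgebra.counit : H →ₗ[k] k) b = 0}

/-- `H·S⁺`, the left ideal of `H` generated by `S ∩ ker ε`. -/
def HSplus (S : Set H) : Submodule k H :=
  leftIdealGen k H (plusPart k H S)

/-- The subspace `J_B ⊆ H ⊗ H` spanned by `{xb ⊗ y − x ⊗ by : x, y ∈ H, b ∈ B}`,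
so that `H ⊗_B H = (H ⊗ H)/J_B`. -/
def JB (S : Set H) : Submodule k (H ⊗[k] H) :=
  Submodule.span k
    {z : H ⊗[k] H | ∃ x y : H, ∃ b ∈ S, z = (x * b) ⊗ₜ[k] y - x ⊗ₜ[k] (b * y)}

/-- `B` is the equalizer of the two canonical maps `H → H ⊗_B H`. -/
def equalizerCond (S : Set H) : Prop :=
  {h : H | h ⊗ₜ[k] (1 : H) - (1 : H) ⊗ₜ[k] h ∈ JB k H S} = S

/-- `H/I` is the coequalizer of `ε ⊗ id` and `id ⊗ ε` restricted to `H □^{H/I} H`, i.e.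
`I` is the subspace spanned by `{Σ ε(xᵢ)yᵢ − Σ xᵢε(yᵢ) : Σ xᵢ ⊗ yᵢ ∈ H □^{H/I} H}`. -/
def coequalizerCond (I : Submodule k H) : Prop :=
  I = Submodule.map (epsTensorId k H - idTensorEps k H) (cotensor k H I)

/-! ### Auxiliary lemmas -/

section Aux

variable {k H}

open Coalgebra LinearMap

lemma epsTensorId_tmul (x y : H) : epsTensorId k H (x ⊗ₜ[k] y) = counit (R := k) x • y := by
  simp [epsTensorId]

lemma idTensorEps_tmul (x y : H) : idTensorEps k H (x ⊗ₜ[k] y) = counit (R := k) y • x := by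
  simp [idTensorEps]

lemma epsTensorId_comul (x : H) : epsTensorId k H (comul (R := k) x) = x := by
  have h : TensorProduct.map (counit : H →ₗ[k] k) (.id : H →ₗ[k] H)
      = LinearMap.rTensor H (counit : H →ₗ[k] k) := rfl
  rw [epsTensorId, LinearMap.comp_apply, h, Coalgebra.rTensor_counit_comul]
  simp

lemma idTensorEps_comul (x : H) : idTensorEps k H (comul (R := k) x) = x := by
  have h : TensorProduct.map (.id : H →ₗ[k] H) (counit : H →ₗ[k] k)
      = LinearMap.lTensor H (counit : H →ₗ[k] k) := rfl
  rw [idTensorEps, LinearMap.comp_apply, h, Coalgebra.lTensor_counit_comul]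
  simp

/-- `x ⊗ (q ⊗ y) ↦ (ε x * ε y) • q`. -/
def Phi (I : Submodule k H) : H ⊗[k] ((H ⧸ I) ⊗[k] H) →ₗ[k] H ⧸ I :=
  (TensorProduct.lid k (H ⧸ I)).toLinearMap ∘ₗ
    TensorProduct.map (counit : H →ₗ[k] k)
      ((TensorProduct.rid k (H ⧸ I)).toLinearMap ∘ₗ
        TensorProduct.map (.id : (H ⧸ I) →ₗ[k] (H ⧸ I)) (counit : H →ₗ[k] k))

lemma Phi_tmul (I : Submodule k H) (x : H) (q : H ⧸ I) (y : H) :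
    Phi I (x ⊗ₜ[k] (q ⊗ₜ[k] y)) = (counit (R := k) x * counit (R := k) y) • q := by
  simp [Phi, smul_smul, mul_comm]

lemma PhiL_aux (I : Submodule k H) (y : H) (u : H ⊗[k] H) :
    Phi I (TensorProduct.map (.id : H →ₗ[k] H) (TensorProduct.map I.mkQ (.id : H →ₗ[k] H))
      ((TensorProduct.assoc k H H H).toLinearMap (u ⊗ₜ[k] y))) =
      counit (R := k) y • I.mkQ (epsTensorId k H u) := by
  induction u using TensorProduct.induction_on with
  | zero => simp only [zero_tmul, map_zero, smul_zero]
  | tmul a c =>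
      simp [Phi_tmul, epsTensorId_tmul, smul_smul, mul_comm]
  | add u v hu hv =>
      simp only [add_tmul, map_add, hu, hv, smul_add]

lemma PhiL (I : Submodule k H) (w : H ⊗[k] H) :
    Phi I (cotensorL k H I w) = I.mkQ (idTensorEps k H w) := by
  induction w using TensorProduct.induction_on with
  | zero => simp
  | tmul x y =>
      have h1 : cotensorL k H I (x ⊗ₜ[k] y)
          = TensorProduct.map (.id : H →ₗ[k] H) (TensorProduct.map I.mkQ (.id : H →ₗ[k] H))
            ((TensorProduct.assoc k H H H).toLinearMap ((comul (R := k) x) ⊗ₜ[k] y)) := by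
        simp [cotensorL]
      rw [h1, PhiL_aux, epsTensorId_comul, idTensorEps_tmul, map_smul]
  | add u v hu hv => simp only [map_add, hu, hv]

lemma PhiR_aux (I : Submodule k H) (x : H) (v : H ⊗[k] H) :
    Phi I (x ⊗ₜ[k] (TensorProduct.map I.mkQ (.id : H →ₗ[k] H) v)) =
      counit (R := k) x • I.mkQ (idTensorEps k H v) := by
  induction v using TensorProduct.induction_on with
  | zero => simp
  | tmul c d => simp [Phi_tmul, idTensorEps_tmul, smul_smul]
  | add u v hu hv => simp only [map_add, tmul_add, hu, hv, smul_add]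

lemma PhiR (I : Submodule k H) (w : H ⊗[k] H) :
    Phi I (cotensorR k H I w) = I.mkQ (epsTensorId k H w) := by
  induction w using TensorProduct.induction_on with
  | zero => simp
  | tmul x y =>
      have h1 : cotensorR k H I (x ⊗ₜ[k] y)
          = x ⊗ₜ[k] (TensorProduct.map I.mkQ (.id : H →ₗ[k] H) (comul (R := k) y)) := by
        simp [cotensorR]
      rw [h1, PhiR_aux, idTensorEps_comul, epsTensorId_tmul, map_smul]
  | add u v hu hv => simp only [map_add, hu, hv]

/-- Half of the statement that holds for every subspace `I`: applying `ε ⊗ id ⊗ ε`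
to the cotensor relation shows that the coequalizer map lands in `I`. -/
lemma map_cotensor_le (I : Submodule k H) :
    Submodule.map (epsTensorId k H - idTensorEps k H) (cotensor k H I) ≤ I := by
  rintro _ ⟨w, hw, rfl⟩
  have h : cotensorL k H I w = cotensorR k H I w := by
    have := hw
    simp only [cotensor, SetLike.mem_coe, LinearMap.mem_ker, LinearMap.sub_apply,
      sub_eq_zero] at this
    exact this
  have h2 := congrArg (Phi I) h
  rw [PhiL, PhiR] at h2
  have h3 : I.mkQ ((epsTensorId k H - idTensorEps k H) w) = 0 := by
    simp [LinearMap.sub_apply, map_sub, h2]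
  rw [Submodule.mkQ_apply, Submodule.Quotient.mk_eq_zero] at h3
  exact h3

variable (B : Subalgebra k H)

lemma mkQ_mul_mem (x b : H) (hb : b ∈ B) :
    (HSplus k H (B : Set H)).mkQ (x * b)
      = counit (R := k) b • (HSplus k H (B : Set H)).mkQ x := by
  set I := HSplus k H (B : Set H) with hI
  have hb' : b - algebraMap k H (counit (R := k) b) ∈ plusPart k H (B : Set H) := by
    refine ⟨?_, ?_⟩
    · exact sub_mem hb (B.algebraMap_mem _)
    · simp
  have hmem : x * b - counit (R := k) b • x ∈ I := by
    have he : x * b - counit (R := k) b • x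
        = x * (b - algebraMap k H (counit (R := k) b)) := by
      rw [mul_sub, Algebra.algebraMap_eq_smul_one, mul_smul_comm, mul_one]
    rw [he]
    exact Submodule.subset_span ⟨x, _, hb', rfl⟩
  rw [← sub_eq_zero, ← map_smul, ← map_sub, Submodule.mkQ_apply, Submodule.Quotient.mk_eq_zero]
  exact hmem

lemma key_mul (hB : IsRightCoidealSubalgebra k H B) (b : H) (hb : b ∈ B) (x y : H) :
    TensorProduct.map (HSplus k H (B : Set H)).mkQ (.id : H →ₗ[k] H)
        ((x ⊗ₜ[k] y) * comul (R := k) b)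
      = (HSplus k H (B : Set H)).mkQ x ⊗ₜ[k] (y * b) := by
  set I := HSplus k H (B : Set H) with hI
  obtain ⟨t, ht⟩ := hB b hb
  have main : ∀ t : (Subalgebra.toSubmodule B) ⊗[k] H,
      TensorProduct.map I.mkQ (.id : H →ₗ[k] H)
        ((x ⊗ₜ[k] y) *
          (TensorProduct.map (Subalgebra.toSubmodule B).subtype (.id : H →ₗ[k] H) t))
      = I.mkQ x ⊗ₜ[k]
          (y * epsTensorId k H
            (TensorProduct.map (Subalgebra.toSubmodule B).subtype (.id : H →ₗ[k] H) t)) := by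
    intro t
    induction t using TensorProduct.induction_on with
    | zero => simp
    | tmul β h =>
        simp only [TensorProduct.map_tmul, Algebra.TensorProduct.tmul_mul_tmul,
          LinearMap.id_coe, id_eq, Submodule.coe_subtype, epsTensorId_tmul]
        rw [mkQ_mul_mem B x (β : H) β.2, mul_smul_comm, tmul_smul, ← smul_tmul']
    | add u v hu hv =>
        simp only [map_add, mul_add, tmul_add, hu, hv]
  have hmt := main t
  rw [ht] at hmt
  rw [hmt, epsTensorId_comul]

lemma key_mul' (hB : IsRightCoidealSubalgebra k H B) (b : H) (hb : b ∈ B) (u : H ⊗[k] H) :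
    TensorProduct.map (HSplus k H (B : Set H)).mkQ (.id : H →ₗ[k] H) (u * comul (R := k) b)
      = TensorProduct.map (HSplus k H (B : Set H)).mkQ (.id : H →ₗ[k] H)
          (LinearMap.lTensor H (LinearMap.mulRight k b) u) := by
  induction u using TensorProduct.induction_on with
  | zero => simp
  | tmul x y =>
      rw [key_mul B hB b hb x y]
      simp
  | add u v hu hv => simp only [add_mul, map_add, hu, hv]

/-- `g₁ = g₂ : H → (H/I) ⊗ H`. -/
lemma g_eq (hB : IsRightCoidealSubalgebra k H B) (b : H) (hb : b ∈ B) (y : H) :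
    TensorProduct.map (HSplus k H (B : Set H)).mkQ (.id : H →ₗ[k] H)
        (LinearMap.lTensor H (LinearMap.mulRight k b) (comul (R := k) y))
      = TensorProduct.map (HSplus k H (B : Set H)).mkQ (.id : H →ₗ[k] H)
          (comul (R := k) (y * b)) := by
  rw [Bialgebra.comul_mul, key_mul' B hB b hb]

lemma eps_lTensor (b : H) (u : H ⊗[k] H) :
    epsTensorId k H (LinearMap.lTensor H (LinearMap.mulRight k b) u)
      = epsTensorId k H u * b := by
  induction u using TensorProduct.induction_on with
  | zero => simp
  | tmul x y => simp [epsTensorId_tmul, smul_mul_assoc]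
  | add u v hu hv => simp only [map_add, hu, hv, add_mul]

lemma ide_lTensor (b : H) (u : H ⊗[k] H) :
    idTensorEps k H (LinearMap.lTensor H (LinearMap.mulRight k b) u)
      = counit (R := k) b • idTensorEps k H u := by
  induction u using TensorProduct.induction_on with
  | zero => simp
  | tmul x y => simp [idTensorEps_tmul, smul_smul, mul_comm]
  | add u v hu hv => simp only [map_add, hu, hv, smul_add]

lemma cotensorR_lTensor (I : Submodule k H) (b h0 : H) :
    cotensorR k H I (LinearMap.lTensor H (LinearMap.mulRight k b) (comul (R := k) h0))
      = LinearMap.lTensor H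
          (TensorProduct.map I.mkQ (.id : H →ₗ[k] H) ∘ₗ (comul : H →ₗ[k] H ⊗[k] H)
            ∘ₗ LinearMap.mulRight k b)
          (comul (R := k) h0) := by
  have h : cotensorR k H I ∘ₗ LinearMap.lTensor H (LinearMap.mulRight k b)
      = LinearMap.lTensor H
          (TensorProduct.map I.mkQ (.id : H →ₗ[k] H) ∘ₗ (comul : H →ₗ[k] H ⊗[k] H)
            ∘ₗ LinearMap.mulRight k b) := by
    apply TensorProduct.ext'
    intro x y
    simp [cotensorR]
  exact LinearMap.congr_fun h (comul h0)

lemma cotensorL_lTensor (I : Submodule k H) (b h0 : H) :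
    cotensorL k H I (LinearMap.lTensor H (LinearMap.mulRight k b) (comul (R := k) h0))
      = LinearMap.lTensor H
          (TensorProduct.map I.mkQ (.id : H →ₗ[k] H)
            ∘ₗ LinearMap.lTensor H (LinearMap.mulRight k b)
            ∘ₗ (comul : H →ₗ[k] H ⊗[k] H))
          (comul (R := k) h0) := by
  have hA : cotensorL k H I ∘ₗ LinearMap.lTensor H (LinearMap.mulRight k b)
      = TensorProduct.map (.id : H →ₗ[k] H) (TensorProduct.map I.mkQ (.id : H →ₗ[k] H))
          ∘ₗ (TensorProduct.assoc k H H H).toLinearMap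
          ∘ₗ LinearMap.lTensor (H ⊗[k] H) (LinearMap.mulRight k b)
          ∘ₗ LinearMap.rTensor H (comul : H →ₗ[k] H ⊗[k] H) := by
    apply TensorProduct.ext'
    intro x y
    simp [cotensorL]
  have hB2 : (TensorProduct.assoc k H H H).toLinearMap
        ∘ₗ LinearMap.lTensor (H ⊗[k] H) (LinearMap.mulRight k b)
      = LinearMap.lTensor H (LinearMap.lTensor H (LinearMap.mulRight k b))
        ∘ₗ (TensorProduct.assoc k H H H).toLinearMap := by
    apply TensorProduct.ext_threefold
    intro x y z
    simp
  have hco : (TensorProduct.assoc k H H H).toLinearMap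
        (LinearMap.rTensor H (comul : H →ₗ[k] H ⊗[k] H) (comul (R := k) h0))
      = LinearMap.lTensor H (comul : H →ₗ[k] H ⊗[k] H) (comul (R := k) h0) :=
    Coalgebra.coassoc_apply h0
  have e1 := LinearMap.congr_fun hA (comul (R := k) h0)
  simp only [LinearMap.comp_apply] at e1
  have e2 := LinearMap.congr_fun hB2
    (LinearMap.rTensor H (comul : H →ₗ[k] H ⊗[k] H) (comul (R := k) h0))
  simp only [LinearMap.comp_apply] at e2
  rw [e1, e2, hco]
  have : TensorProduct.map (.id : H →ₗ[k] H) (TensorProduct.map I.mkQ (.id : H →ₗ[k] H))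
      = LinearMap.lTensor H (TensorProduct.map I.mkQ (.id : H →ₗ[k] H)) := rfl
  rw [this, LinearMap.lTensor_comp, LinearMap.lTensor_comp]
  simp only [LinearMap.comp_apply]

end Aux

/-- For a right coideal subalgebra `B`, the left ideal `HB⁺` equals
the subspace spanned by `{Σ ε(xᵢ)yᵢ − Σ xᵢε(yᵢ) : Σ xᵢ ⊗ yᵢ ∈ H □^{H/HB⁺} H}`, i.e.
`H → H/HB⁺` coequalizes `ε ⊗ id` and `id ⊗ ε` on the cotensor product. -/
theorem HSplus_coequalizerCond (k H : Type*) [Field k] [Ring H] [HopfAlgebra k H]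
    (B : Subalgebra k H) (hB : IsRightCoidealSubalgebra k H B) :
    coequalizerCond k H (HSplus k H (B : Set H)) := by
  set I := HSplus k H (B : Set H) with hIdef
  refine le_antisymm ?_ (map_cotensor_le I)
  rw [hIdef, HSplus, leftIdealGen]
  apply Submodule.span_le.mpr
  rintro z ⟨x, b, hbmem, rfl⟩
  obtain ⟨hbB, hbe⟩ := hbmem
  have hg : (TensorProduct.map I.mkQ (.id : H →ₗ[k] H)
        ∘ₗ LinearMap.lTensor H (LinearMap.mulRight k b)
        ∘ₗ (Coalgebra.comul : H →ₗ[k] H ⊗[k] H))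
      = TensorProduct.map I.mkQ (.id : H →ₗ[k] H)
        ∘ₗ (Coalgebra.comul : H →ₗ[k] H ⊗[k] H) ∘ₗ LinearMap.mulRight k b := by
    apply LinearMap.ext
    intro y
    simpa using g_eq B hB b hbB y
  have hmem : LinearMap.lTensor H (LinearMap.mulRight k b) (Coalgebra.comul (R := k) x)
      ∈ cotensor k H I := by
    simp only [cotensor, LinearMap.mem_ker, LinearMap.sub_apply, sub_eq_zero]
    rw [cotensorL_lTensor, cotensorR_lTensor, hg]
  refine ⟨LinearMap.lTensor H (LinearMap.mulRight k b) (Coalgebra.comul (R := k) x), hmem, ?_⟩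
  rw [LinearMap.sub_apply, eps_lTensor, ide_lTensor, epsTensorId_comul, idTensorEps_comul,
    hbe, zero_smul, sub_zero]

end HopfGalois
end
end

section
/- Let k be a field, H a Hopf algebra over k, and I a left ideal coideal of H. Then H^{co H/I} is a right coideal subalgebra of H: it contains 1, is closed under multiplication and scalar multiplication, and satisfies Δ(H^{co H/I}) ⊆ H^{co H/I} ⊗ H (as a subspace of H ⊗ H). -/
open TensorProduct

noncomputable section

namespace HopfGalois

variable (k : Type*) (H : Type*) [Field k] [Ring H] [HopfAlgebra k H]

section Aux

set_option synthInstance.maxHeartbeats 1000000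
set_option maxHeartbeats 1000000

variable {k H : Type*} [Field k] [Ring H] [HopfAlgebra k H] (I : Submodule k H)

lemma mem_coinv_iff (x : H) : x ∈ coinv k H I ↔
    TensorProduct.map I.mkQ LinearMap.id ((Coalgebra.comul : H →ₗ[k] H ⊗[k] H) x)
      = I.mkQ 1 ⊗ₜ[k] x := by
  simp only [coinv, LinearMap.mem_ker, LinearMap.sub_apply, LinearMap.comp_apply,
    TensorProduct.mk_apply, sub_eq_zero]

/-- Left multiplication by `h` descends to `H ⧸ I` when `I` is a left ideal. -/
def lmulQ (hmul : ∀ (h x : H), x ∈ I → h * x ∈ I) (h : H) : (H ⧸ I) →ₗ[k] (H ⧸ I) :=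
  I.mapQ I (LinearMap.mulLeft k h) (fun x hx => hmul h x hx)

lemma lmulQ_mkQ (hmul : ∀ (h x : H), x ∈ I → h * x ∈ I) (h c : H) :
    lmulQ I hmul h (Submodule.Quotient.mk c) = Submodule.Quotient.mk (h * c) := by
  rfl

lemma map_mkQ_tmul_mul (hmul : ∀ (h x : H), x ∈ I → h * x ∈ I) (h h' : H)
    (w : H ⊗[k] H) :
    TensorProduct.map I.mkQ LinearMap.id ((h ⊗ₜ[k] h') * w)
      = TensorProduct.map (lmulQ I hmul h) (LinearMap.mulLeft k h')
          (TensorProduct.map I.mkQ LinearMap.id w) := by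
  induction w with
  | zero => simp
  | tmul c d =>
      simp [Algebra.TensorProduct.tmul_mul_tmul, lmulQ_mkQ I hmul]
  | add w₁ w₂ ih₁ ih₂ => simp [mul_add, ih₁, ih₂]

lemma map_mkQ_mul (hmul : ∀ (h x : H), x ∈ I → h * x ∈ I) (y : H)
    (hy : TensorProduct.map I.mkQ LinearMap.id ((Coalgebra.comul : H →ₗ[k] H ⊗[k] H) y)
      = I.mkQ 1 ⊗ₜ[k] y) (v : H ⊗[k] H) :
    TensorProduct.map I.mkQ LinearMap.id (v * (Coalgebra.comul : H →ₗ[k] H ⊗[k] H) y)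
      = TensorProduct.map LinearMap.id (LinearMap.mulRight k y)
          (TensorProduct.map I.mkQ LinearMap.id v) := by
  induction v with
  | zero => simp
  | tmul h h' =>
      rw [map_mkQ_tmul_mul I hmul, hy]
      simp [lmulQ_mkQ I hmul]
  | add v₁ v₂ ih₁ ih₂ => simp [add_mul, ih₁, ih₂]

lemma assoc_rTensor_comp_comul_aux (u : H ⊗[k] H) (b : H) :
    (TensorProduct.assoc k (H ⧸ I) H H)
        ((TensorProduct.map I.mkQ LinearMap.id u) ⊗ₜ[k] b)
      = LinearMap.rTensor (H ⊗[k] H) I.mkQ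
          ((TensorProduct.assoc k H H H) (u ⊗ₜ[k] b)) := by
  induction u with
  | zero => simp
  | tmul c d => simp
  | add u₁ u₂ ih₁ ih₂ => simp [add_tmul, ih₁, ih₂]

lemma assoc_rTensor_map (z : (H ⊗[k] H) ⊗[k] H) :
    (TensorProduct.assoc k (H ⧸ I) H H)
        (LinearMap.rTensor H (TensorProduct.map I.mkQ LinearMap.id) z)
      = LinearMap.rTensor (H ⊗[k] H) I.mkQ ((TensorProduct.assoc k H H H) z) := by
  induction z with
  | zero => simp only [map_zero]
  | tmul u b =>
      rw [LinearMap.rTensor_tmul]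
      exact assoc_rTensor_comp_comul_aux I u b
  | add z₁ z₂ ih₁ ih₂ => rw [map_add, map_add, ih₁, ih₂, map_add, map_add]

lemma assoc_rTensor_mk (w : H ⊗[k] H) :
    (TensorProduct.assoc k (H ⧸ I) H H)
        (LinearMap.rTensor H (TensorProduct.mk k (H ⧸ I) H (I.mkQ 1)) w)
      = I.mkQ 1 ⊗ₜ[k] w := by
  induction w with
  | zero => simp only [map_zero, tmul_zero]
  | tmul a b => simp
  | add w₁ w₂ ih₁ ih₂ => rw [map_add, map_add, ih₁, ih₂, tmul_add]

lemma rTensor_mkQ_lTensor_comul (w : H ⊗[k] H) :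
    LinearMap.rTensor (H ⊗[k] H) I.mkQ
        (LinearMap.lTensor H (Coalgebra.comul : H →ₗ[k] H ⊗[k] H) w)
      = LinearMap.lTensor (H ⧸ I) (Coalgebra.comul : H →ₗ[k] H ⊗[k] H)
          (TensorProduct.map I.mkQ LinearMap.id w) := by
  induction w with
  | zero => simp
  | tmul a b => simp
  | add w₁ w₂ ih₁ ih₂ => simp [ih₁, ih₂]

end Aux

/-- For a left ideal coideal `I`, the coinvariants `H^{co H/I}` form a
right coideal subalgebra: they contain `1`, are closed under multiplication and scalar
multiplication, and `Δ(H^{co H/I}) ⊆ H^{co H/I} ⊗ H`. -/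
theorem coinv_isRightCoidealSubalgebra (k H : Type*) [Field k] [Ring H] [HopfAlgebra k H]
    (I : Submodule k H) (hI : IsLeftIdealCoideal k H I) :
    (1 : H) ∈ coinv k H I ∧
    (∀ x y : H, x ∈ coinv k H I → y ∈ coinv k H I → x * y ∈ coinv k H I) ∧
    (∀ (c : k) (x : H), x ∈ coinv k H I → c • x ∈ coinv k H I) ∧
    (∀ x ∈ coinv k H I, (Coalgebra.comul : H →ₗ[k] H ⊗[k] H) x ∈
      LinearMap.range
        (TensorProduct.map (coinv k H I).subtype (LinearMap.id : H →ₗ[k] H))) := by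
  refine ⟨?_, ?_, ?_, ?_⟩
  · rw [mem_coinv_iff]
    simp [Algebra.TensorProduct.one_def]
  · intro x y hx hy
    rw [mem_coinv_iff] at hx hy ⊢
    rw [Bialgebra.comul_mul, map_mkQ_mul I hI.mul_mem_left y hy, hx]
    simp
  · intro c x hx
    exact Submodule.smul_mem _ c hx
  · intro x hx
    set T : H →ₗ[k] (H ⧸ I) ⊗[k] H :=
      (TensorProduct.map I.mkQ (LinearMap.id : H →ₗ[k] H)
          ∘ₗ (Coalgebra.comul : H →ₗ[k] H ⊗[k] H))
        - TensorProduct.mk k (H ⧸ I) H (I.mkQ 1) with hT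
    have hexact : Function.Exact ((LinearMap.ker T).subtype.rTensor H) (T.rTensor H) :=
      Module.Flat.rTensor_exact H (LinearMap.exact_subtype_ker_map T)
    have h0 : T.rTensor H ((Coalgebra.comul : H →ₗ[k] H ⊗[k] H) x) = 0 := by
      rw [hT, LinearMap.rTensor_sub]
      show LinearMap.rTensor H (TensorProduct.map I.mkQ LinearMap.id
          ∘ₗ (Coalgebra.comul : H →ₗ[k] H ⊗[k] H)) ((Coalgebra.comul : H →ₗ[k] H ⊗[k] H) x)
        - LinearMap.rTensor H (TensorProduct.mk k (H ⧸ I) H (I.mkQ 1))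
          ((Coalgebra.comul : H →ₗ[k] H ⊗[k] H) x) = 0
      rw [sub_eq_zero]
      apply (TensorProduct.assoc k (H ⧸ I) H H).injective
      have hx' := (mem_coinv_iff I x).mp hx
      rw [LinearMap.rTensor_comp, LinearMap.comp_apply, assoc_rTensor_map,
        assoc_rTensor_mk]
      have hco : (TensorProduct.assoc k H H H)
          (LinearMap.rTensor H (Coalgebra.comul : H →ₗ[k] H ⊗[k] H)
            ((Coalgebra.comul : H →ₗ[k] H ⊗[k] H) x))
          = LinearMap.lTensor H (Coalgebra.comul : H →ₗ[k] H ⊗[k] H)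
              ((Coalgebra.comul : H →ₗ[k] H ⊗[k] H) x) := Coalgebra.coassoc_apply x
      rw [hco, rTensor_mkQ_lTensor_comul, hx', LinearMap.lTensor_tmul]
    obtain ⟨z, hz⟩ := (hexact _).mp h0
    exact ⟨z, hz⟩

end HopfGalois
end
end
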